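/- Let k be a field, C a nonempty finite connected partially ordered set, and M a C-module over k such that every structure map φ_{xy} (x ≤ y) is an isomorphism and M is holonomy-free. Fix x₀ ∈ C and let d = dim M(x₀). Then there exist submodules L₁, …, L_d of M such that for every x ∈ C each Lᵢ(x) is one-dimensional, every φ_{xy} maps Lᵢ(x) isomorphically onto Lᵢ(y), and M(x) is the internal direct sum ⊕ᵢ Lᵢ(x). -/

import Mathlib

/-!
STATEMENT 8: A holonomy-free C-module over a field k on a nonempty finite connected
poset C, all of whose structure maps are isomorphisms (a block), decomposes as a
direct sum of d = dim M(x₀) generalized bar codes (one-dimensional sub-blocks).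
-/

section

variable {k : Type*} [Field k] {C : Type*} [PartialOrder C]
  (M : C → Type*) [∀ x, AddCommGroup (M x)] [∀ x, Module k (M x)]
  (φ : ∀ x y : C, x ≤ y → (M x →ₗ[k] M y))

/-- `M` (with all structure maps isomorphisms) is holonomy-free: along any zig-zag
loop, any chain of vectors compatible with the structure maps returns to its
starting value; i.e., the composite of the maps `λᵢ = φ^{±1}` once around any
zig-zag loop is the identity. -/
def HolonomyFree : Prop :=
  ∀ (n : ℕ) (v : Fin (n + 1) → C) (hloop : v (Fin.last n) = v 0),
    (∀ i : Fin n, v i.castSucc ≤ v i.succ ∨ v i.succ ≤ v i.castSucc) →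
    ∀ w : ∀ i, M (v i),
      (∀ i : Fin n,
        (∃ h : v i.castSucc ≤ v i.succ, φ _ _ h (w i.castSucc) = w i.succ) ∨
        (∃ h : v i.succ ≤ v i.castSucc, φ _ _ h (w i.succ) = w i.castSucc)) →
      w (Fin.last n) = cast (congrArg M hloop).symm (w 0)

/-- One step of transport: `q` is obtained from `p` by applying a structure map
forwards or backwards. -/
def RStep (p q : Σ x : C, M x) : Prop :=
  (∃ h : p.1 ≤ q.1, φ p.1 q.1 h p.2 = q.2) ∨ (∃ h : q.1 ≤ p.1, φ q.1 p.1 h q.2 = p.2)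

/-- Transport relation: reflexive transitive closure of `RStep`. -/
def Reach (p q : Σ x : C, M x) : Prop := Relation.ReflTransGen (RStep M φ) p q

variable {M φ}

lemma RStep.symm' {p q : Σ x : C, M x} (h : RStep M φ p q) : RStep M φ q p := h.symm

lemma Reach.symm' {p q : Σ x : C, M x} (h : Reach M φ p q) : Reach M φ q p :=
  haveI : Std.Symm (RStep M φ) := ⟨fun _ _ h => h.symm⟩
  Relation.ReflTransGen.symmetric.symm _ _ h

lemma Reach.trans' {p q r : Σ x : C, M x} (h : Reach M φ p q) (h' : Reach M φ q r) :
    Reach M φ p r := Relation.ReflTransGen.trans h h'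

/-- Key uniqueness lemma from holonomy-freeness: along a transport whose endpoints lie
over the same poset element, the vectors agree. -/
lemma Reach.heq (hfree : HolonomyFree M φ) {p q : Σ x : C, M x} (hr : Reach M φ p q)
    (hfst : p.1 = q.1) : HEq p.2 q.2 := by
  obtain ⟨l, hchain, hlast⟩ := List.exists_isChain_cons_of_relationReflTransGen hr
  set LL : List (Σ x : C, M x) := p :: l with hLL
  have hne : LL ≠ [] := by simp [hLL]
  set n : ℕ := l.length with hn
  have hlen : LL.length = n + 1 := by simp [hLL, hn]
  let v : Fin (n + 1) → C := fun i => (LL.get (Fin.cast hlen.symm i)).1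
  let w : ∀ i, M (v i) := fun i => (LL.get (Fin.cast hlen.symm i)).2
  have hgetlast : LL.get (Fin.cast hlen.symm (Fin.last n)) = q := by
    rw [← hlast, List.getLast_eq_getElem]
    congr 1
  have hget0 : LL.get (Fin.cast hlen.symm 0) = p := rfl
  have hloop : v (Fin.last n) = v 0 := by
    show (LL.get _).1 = (LL.get _).1
    rw [hgetlast, hget0, hfst]
  have hchain' : List.IsChain (RStep M φ) LL := hchain
  rw [List.isChain_iff_getElem] at hchain'
  have hstep : ∀ i : Fin n, RStep M φ (LL.get (Fin.cast hlen.symm i.castSucc))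
      (LL.get (Fin.cast hlen.symm i.succ)) := by
    intro i
    have := hchain' i (by simp [hlen, i.isLt])
    exact this
  have hcompat : ∀ i : Fin n,
      (∃ h : v i.castSucc ≤ v i.succ, φ _ _ h (w i.castSucc) = w i.succ) ∨
      (∃ h : v i.succ ≤ v i.castSucc, φ _ _ h (w i.succ) = w i.castSucc) := fun i => hstep i
  have hcmp : ∀ i : Fin n, v i.castSucc ≤ v i.succ ∨ v i.succ ≤ v i.castSucc := by
    intro i
    rcases hcompat i with ⟨h, _⟩ | ⟨h, _⟩
    · exact Or.inl h
    · exact Or.inr h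
  have hmain := hfree n v hloop hcmp w hcompat
  have h1 : HEq (w (Fin.last n)) (w 0) := hmain ▸ cast_heq _ _
  have h2 : HEq (w (Fin.last n)) q.2 := by
    show HEq (LL.get (Fin.cast hlen.symm (Fin.last n))).2 q.2
    rw [hgetlast]
  have h3 : (w 0) = p.2 := rfl
  exact (h2.symm.trans h1).trans (h3 ▸ HEq.rfl) |>.symm

end

section

variable {k : Type*} [Field k] {C : Type*} [PartialOrder C]
  {M : C → Type*} [∀ x, AddCommGroup (M x)] [∀ x, Module k (M x)]
  {φ : ∀ x y : C, x ≤ y → (M x →ₗ[k] M y)}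

lemma Reach.eq_of_fst_eq (hfree : HolonomyFree M φ) {x : C} {a b : M x}
    (hr : Reach M φ ⟨x, a⟩ ⟨x, b⟩) : a = b :=
  eq_of_heq (hr.heq hfree rfl)

lemma Reach.unique (hfree : HolonomyFree M φ) {p : Σ x : C, M x} {y : C} {b b' : M y}
    (h1 : Reach M φ p ⟨y, b⟩) (h2 : Reach M φ p ⟨y, b'⟩) : b = b' :=
  Reach.eq_of_fst_eq hfree (h1.symm'.trans' h2)

lemma reach_exists (hiso : ∀ (x y : C) (h : x ≤ y), Function.Bijective (φ x y h))
    (hconn : ∀ x y : C, ∃ (n : ℕ) (v : Fin (n + 1) → C), v 0 = x ∧ v (Fin.last n) = y ∧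
      ∀ i : Fin n, v i.castSucc ≤ v i.succ ∨ v i.succ ≤ v i.castSucc)
    (x y : C) (a : M x) : ∃ b : M y, Reach M φ ⟨x, a⟩ ⟨y, b⟩ := by
  have comp : Relation.ReflTransGen (fun u v : C => u ≤ v ∨ v ≤ u) x y := by
    obtain ⟨n, v, h0, h1, hcmp⟩ := hconn x y
    have : ∀ i : Fin (n + 1), Relation.ReflTransGen (fun u v : C => u ≤ v ∨ v ≤ u) (v 0) (v i) := by
      intro i
      induction i using Fin.induction with
      | zero => exact Relation.ReflTransGen.refl
      | succ i ih => exact ih.tail (hcmp i)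
    rw [← h0, ← h1]; exact this _
  induction comp with
  | refl => exact ⟨a, Relation.ReflTransGen.refl⟩
  | @tail u z hxu huz ih =>
    obtain ⟨b, hb⟩ := ih
    rcases huz with h | h
    · exact ⟨φ u z h b, hb.tail (Or.inl ⟨h, rfl⟩)⟩
    · obtain ⟨c, hc⟩ := (hiso z u h).2 b
      exact ⟨c, hb.tail (Or.inr ⟨h, hc⟩)⟩

lemma Reach.smul {p q : Σ x : C, M x} (hr : Reach M φ p q) (c : k) :
    Reach M φ ⟨p.1, c • p.2⟩ ⟨q.1, c • q.2⟩ := by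
  induction hr with
  | refl => exact Relation.ReflTransGen.refl
  | @tail u z _ huz ih =>
    refine ih.tail ?_
    rcases huz with ⟨h, he⟩ | ⟨h, he⟩
    · exact Or.inl ⟨h, by simp [← he]⟩
    · exact Or.inr ⟨h, by simp [← he]⟩

lemma Reach.add (hiso : ∀ (x y : C) (h : x ≤ y), Function.Bijective (φ x y h))
    {p q : Σ x : C, M x} (hr : Reach M φ p q) (a' : M p.1) :
    ∃ b' : M q.1, Reach M φ ⟨p.1, a'⟩ ⟨q.1, b'⟩ ∧
      Reach M φ ⟨p.1, p.2 + a'⟩ ⟨q.1, q.2 + b'⟩ := by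
  induction hr with
  | refl => exact ⟨a', Relation.ReflTransGen.refl, Relation.ReflTransGen.refl⟩
  | @tail u z hu huz ih =>
    obtain ⟨b', h1, h2⟩ := ih
    rcases huz with ⟨h, he⟩ | ⟨h, he⟩
    · exact ⟨φ u.1 z.1 h b', h1.tail (Or.inl ⟨h, rfl⟩),
        h2.tail (Or.inl ⟨h, by simp [← he]⟩)⟩
    · obtain ⟨c', hc'⟩ := (hiso z.1 u.1 h).2 b'
      exact ⟨c', h1.tail (Or.inr ⟨h, hc'⟩),
        h2.tail (Or.inr ⟨h, by simp [map_add, he, hc']⟩)⟩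

end

theorem stmt8 (k : Type*) [Field k] (C : Type*) [PartialOrder C] [Fintype C] [Nonempty C]
    (hconn : ∀ x y : C, ∃ (n : ℕ) (v : Fin (n + 1) → C), v 0 = x ∧ v (Fin.last n) = y ∧
      ∀ i : Fin n, v i.castSucc ≤ v i.succ ∨ v i.succ ≤ v i.castSucc)
    (M : C → Type*) [∀ x, AddCommGroup (M x)] [∀ x, Module k (M x)]
    [∀ x, FiniteDimensional k (M x)]
    (φ : ∀ x y : C, x ≤ y → (M x →ₗ[k] M y))
    (hid : ∀ x, φ x x le_rfl = LinearMap.id)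
    (hcomp : ∀ (x y z : C) (hxy : x ≤ y) (hyz : y ≤ z),
      (φ y z hyz).comp (φ x y hxy) = φ x z (hxy.trans hyz))
    (hiso : ∀ (x y : C) (h : x ≤ y), Function.Bijective (φ x y h))
    (hfree : HolonomyFree M φ)
    (x₀ : C) :
    ∃ L : Fin (Module.finrank k (M x₀)) → ∀ x : C, Submodule k (M x),
      (∀ (i) (x y : C) (h : x ≤ y), Submodule.map (φ x y h) (L i x) = L i y) ∧
      (∀ i x, Module.finrank k (L i x) = 1) ∧
      (∀ x, DirectSum.IsInternal fun i => L i x) := by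

  classical
  -- the transport function
  let f : ∀ x : C, M x₀ → M x := fun x a =>
    Classical.choose (reach_exists (φ := φ) hiso hconn x₀ x a)
  have hf : ∀ (x : C) (a : M x₀), Reach M φ ⟨x₀, a⟩ ⟨x, f x a⟩ := fun x a =>
    Classical.choose_spec (reach_exists (φ := φ) hiso hconn x₀ x a)
  have huniq : ∀ (x : C) (a : M x₀) (b : M x), Reach M φ ⟨x₀, a⟩ ⟨x, b⟩ → f x a = b :=
    fun x a b h => Reach.unique hfree (hf x a) h
  have hadd : ∀ (x : C) (a a' : M x₀), f x (a + a') = f x a + f x a' := by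
    intro x a a'
    obtain ⟨b', h1, h2⟩ := Reach.add hiso (hf x a) a'
    have hb' : f x a' = b' := huniq x a' b' h1
    exact (huniq x (a + a') _ h2).trans (by rw [hb'])
  have hsmul : ∀ (x : C) (c : k) (a : M x₀), f x (c • a) = c • f x a :=
    fun x c a => huniq x (c • a) _ ((hf x a).smul c)
  let F : ∀ x : C, M x₀ →ₗ[k] M x := fun x =>
    { toFun := f x, map_add' := hadd x, map_smul' := hsmul x }
  have hFinj : ∀ x, Function.Injective (F x) := by
    intro x a a' h
    have h' : Reach M φ ⟨x₀, a'⟩ ⟨x, f x a⟩ := by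
      rw [show f x a = f x a' from h]; exact hf x a'
    exact Reach.eq_of_fst_eq hfree ((hf x a).trans' h'.symm')
  have hFsurj : ∀ x, Function.Surjective (F x) := by
    intro x b
    obtain ⟨a, ha⟩ := reach_exists (φ := φ) hiso hconn x x₀ b
    exact ⟨a, huniq x a b ha.symm'⟩
  let E : ∀ x : C, M x₀ ≃ₗ[k] M x := fun x =>
    LinearEquiv.ofBijective (F x) ⟨hFinj x, hFsurj x⟩
  have hcompat : ∀ (x y : C) (h : x ≤ y) (a : M x₀), φ x y h (f x a) = f y a := by
    intro x y h a
    exact (huniq y a _ ((hf x a).tail (Or.inl ⟨h, rfl⟩))).symm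
  -- the barcode submodules
  let B := Module.finBasis k (M x₀)
  refine ⟨fun i x => Submodule.span k {f x (B i)}, ?_, ?_, ?_⟩
  · intro i x y h
    rw [Submodule.map_span, Set.image_singleton, hcompat x y h]
  · intro i x
    exact finrank_span_singleton (fun hz => B.ne_zero i (hFinj x (by rw [map_zero]; exact hz)))
  · intro x
    have hbasis : LinearIndependent k (fun i => f x (B i)) := by
      have := B.linearIndependent.map' (F x) (LinearMap.ker_eq_bot.mpr (hFinj x))
      exact this
    refine DirectSum.isInternal_submodule_of_iSupIndep_of_iSup_eq_top
      hbasis.iSupIndep_span_singleton ?_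
    rw [← Submodule.span_range_eq_iSup]
    exact (B.map (E x)).span_eq
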